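/- arXiv:1001.3814 — 3 statements merged into one kernel-verified Lean document; each statement's English description precedes it below -/
import Mathlib

section
/- There exists a constant C > 0 such that for all real x, y and all s > 0, |∂/∂s W_s(x,y)| ≤ C e^{-((x - e^{-s}y)^2 + (y - e^{-s}x)^2)/(8(1 - e^{-2s}))} · e^{-s/2} (1 - e^{-2s})^{-3/2}, where W_s(x,y) = π^{-1/2} (e^{-s}/(1 - e^{-2s}))^{1/2} exp(-((x - e^{-s}y)^2 + (y - e^{-s}x)^2)/(2(1 - e^{-2s}))) is the Hermite heat kernel. -/
open MeasureTheory Real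

/-- The Hermite (Mehler) heat kernel `W_s(x,y)`. -/
noncomputable def hermiteHeatKernel (s x y : ℝ) : ℝ :=
  Real.pi ^ (-(1 : ℝ) / 2) * (Real.exp (-s) / (1 - Real.exp (-2 * s))) ^ ((1 : ℝ) / 2) *
    Real.exp (-((x - Real.exp (-s) * y) ^ 2 + (y - Real.exp (-s) * x) ^ 2) /
      (2 * (1 - Real.exp (-2 * s))))

open Real

lemma hhk_aux (w : ℝ) (hw : 0 ≤ w) : (3/2 + 8*w) * Real.exp (-w) ≤ 10 := by
  have h1 : Real.exp (-w) ≤ 1 := Real.exp_le_one_iff.mpr (by linarith)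
  have h2 : w * Real.exp (-w) ≤ 1 := by
    have h3 : w ≤ Real.exp w := by linarith [Real.add_one_le_exp w]
    have h4 : w * Real.exp (-w) ≤ Real.exp w * Real.exp (-w) :=
      mul_le_mul_of_nonneg_right h3 (Real.exp_pos _).le
    rwa [← Real.exp_add, add_neg_cancel, Real.exp_zero] at h4
  nlinarith [Real.exp_pos (-w)]

set_option maxHeartbeats 1000000 in
lemma hhk_key (x y A P T : ℝ) (hA : 0 < A) (hA1 : A ≤ 1) (hP : 0 < P)
    (hT : 0 < T) (hPT : T^2 = 1 - (P^2)^2) (hp1 : P^2 < 1) :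
    |(A * (((-P^2 * T^2 - P^2 * (2 * (P^2)^2)) / (T^2)^2) * ((1:ℝ)/2) * (T/P))) *
       Real.exp (-((x - P^2*y)^2 + (y - P^2*x)^2) / (2*T^2)) +
      (A * (P/T)) *
       (Real.exp (-((x - P^2*y)^2 + (y - P^2*x)^2) / (2*T^2)) *
         ((-(2*(x - P^2*y)*(P^2*y) + 2*(y - P^2*x)*(P^2*x)) * (2*T^2) -
            -((x - P^2*y)^2 + (y - P^2*x)^2) * (2*(2*(P^2)^2))) / (2*T^2)^2))| ≤
    10 * Real.exp (-((x - P^2*y)^2 + (y - P^2*x)^2) / (8*T^2)) * P * (T*T^2)⁻¹ := by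
  set a := x - P^2*y with ha
  set b := y - P^2*x with hb
  have hQ0 : (0:ℝ) ≤ a^2 + b^2 := by positivity
  have hτ1 : T^2 ≤ 1 := by nlinarith [sq_nonneg (P^2)]
  have hτ : (0:ℝ) < T^2 := by positivity
  -- bound on |Q'| * T^2
  have hQd : |2*a*(P^2*y) + 2*b*(P^2*x)| * T^2 ≤ 4*(a^2 + b^2) := by
    have hid : (2*a*(P^2*y) + 2*b*(P^2*x)) * T^2
        = 4*P^2*(a*b) + 2*(P^2)^2*(a^2+b^2) := by
      rw [ha, hb, hPT]; ring
    calc |2*a*(P^2*y) + 2*b*(P^2*x)| * T^2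
        = |(2*a*(P^2*y) + 2*b*(P^2*x)) * T^2| := by
          rw [abs_mul, abs_of_pos hτ]
      _ = |4*P^2*(a*b) + 2*(P^2)^2*(a^2+b^2)| := by rw [hid]
      _ ≤ 4*(a^2+b^2) := by
          rw [abs_le]
          constructor <;>
            nlinarith [sq_nonneg (P*(a+b)), sq_nonneg (P*(a-b)), sq_nonneg (a+b),
              sq_nonneg (a-b), mul_nonneg (sub_nonneg.mpr hp1.le) hQ0, sq_nonneg P,
              mul_nonneg (mul_nonneg (sq_nonneg P) (sub_nonneg.mpr hp1.le)) hQ0]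
  -- bound on |h'|
  have hhd : |(-(2*a*(P^2*y) + 2*b*(P^2*x)) * (2*T^2) -
      -(a^2 + b^2) * (2*(2*(P^2)^2))) / (2*T^2)^2| ≤ 3*(a^2+b^2)/(T^2)^2 := by
    have hN : |(-(2*a*(P^2*y) + 2*b*(P^2*x))) * (2*T^2) -
        (-(a^2 + b^2)) * (2*(2*(P^2)^2))| ≤ 12*(a^2+b^2) := by
      have h1 : |(-(2*a*(P^2*y) + 2*b*(P^2*x))) * (2*T^2)| ≤ 8*(a^2+b^2) := by
        rw [abs_mul, abs_neg, abs_of_pos (by positivity : (0:ℝ) < 2*T^2)]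
        nlinarith [hQd, abs_nonneg (2*a*(P^2*y) + 2*b*(P^2*x))]
      have h2 : |(-(a^2 + b^2)) * (2*(2*(P^2)^2))| ≤ 4*(a^2+b^2) := by
        rw [abs_mul, abs_neg, abs_of_nonneg hQ0,
          abs_of_nonneg (by positivity : (0:ℝ) ≤ 2*(2*(P^2)^2))]
        nlinarith [mul_nonneg (sub_nonneg.mpr hp1.le) hQ0, sq_nonneg P,
          mul_nonneg (mul_nonneg (sq_nonneg P) (sub_nonneg.mpr hp1.le)) hQ0]
      calc |(-(2*a*(P^2*y) + 2*b*(P^2*x))) * (2*T^2) -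
          (-(a^2 + b^2)) * (2*(2*(P^2)^2))|
          ≤ |(-(2*a*(P^2*y) + 2*b*(P^2*x))) * (2*T^2)| +
            |(-(a^2 + b^2)) * (2*(2*(P^2)^2))| := abs_sub _ _
        _ ≤ 12*(a^2+b^2) := by linarith
    rw [abs_div, abs_of_pos (by positivity : (0:ℝ) < (2*T^2)^2),
      div_le_div_iff₀ (by positivity) (by positivity)]
    nlinarith [mul_le_mul_of_nonneg_right hN (by positivity : (0:ℝ) ≤ (T^2)^2)]
  -- bound on |g'|
  have hgd : |(-P^2 * T^2 - P^2 * (2 * (P^2)^2)) / (T^2)^2| ≤ 3*P^2/(T^2)^2 := by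
    rw [abs_div, abs_of_pos (by positivity : (0:ℝ) < (T^2)^2),
      div_le_div_iff₀ (by positivity) (by positivity)]
    have habs : |(-P^2 * T^2 - P^2 * (2 * (P^2)^2))| = P^2*T^2 + 2*(P^2)^3 := by
      rw [abs_of_nonpos (by nlinarith [sq_nonneg P, sq_nonneg (P^2)])]; ring
    rw [habs]
    have hsmall : P^2*T^2 + 2*(P^2)^3 ≤ 3*P^2 := by
      nlinarith [mul_nonneg (sq_nonneg P) (sub_nonneg.mpr hτ1),
        mul_nonneg (sq_nonneg P) (sub_nonneg.mpr hp1.le),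
        mul_nonneg (sq_nonneg P) (by nlinarith [sq_nonneg P] : (0:ℝ) ≤ 1 - (P^2)^2)]
    nlinarith [mul_le_mul_of_nonneg_right hsmall (by positivity : (0:ℝ) ≤ (T^2)^2)]
  have hEpos : (0:ℝ) < Real.exp (-(a^2 + b^2) / (2*T^2)) := Real.exp_pos _
  have hX1 : |(A * (((-P^2 * T^2 - P^2 * (2 * (P^2)^2)) / (T^2)^2) * ((1:ℝ)/2) * (T/P))) *
      Real.exp (-(a^2 + b^2) / (2*T^2))|
      ≤ A * ((3*P^2/(T^2)^2) * ((1:ℝ)/2) * (T/P)) * Real.exp (-(a^2 + b^2) / (2*T^2)) := by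
    rw [abs_mul, abs_mul, abs_mul, abs_mul, abs_of_pos hA, abs_of_pos hEpos,
      abs_of_pos (div_pos hT hP), abs_of_nonneg (by norm_num : (0:ℝ) ≤ (1:ℝ)/2)]
    gcongr
  have hX2 : |(A * (P/T)) *
      (Real.exp (-(a^2 + b^2) / (2*T^2)) *
        ((-(2*a*(P^2*y) + 2*b*(P^2*x)) * (2*T^2) -
          -(a^2 + b^2) * (2*(2*(P^2)^2))) / (2*T^2)^2))|
      ≤ (A * (P/T)) * (Real.exp (-(a^2 + b^2) / (2*T^2)) * (3*(a^2+b^2)/(T^2)^2)) := by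
    rw [abs_mul, abs_of_pos (by positivity : (0:ℝ) < A * (P/T)), abs_mul,
      abs_of_pos hEpos]
    gcongr
  have hEsplit : Real.exp (-(a^2 + b^2) / (2*T^2))
      = Real.exp (-(a^2 + b^2) / (8*T^2)) * Real.exp (-(3*(a^2+b^2)/(8*T^2))) := by
    rw [← Real.exp_add]; congr 1; field_simp; ring
  calc |(A * (((-P^2 * T^2 - P^2 * (2 * (P^2)^2)) / (T^2)^2) * ((1:ℝ)/2) * (T/P))) *
       Real.exp (-(a^2 + b^2) / (2*T^2)) +
      (A * (P/T)) *
       (Real.exp (-(a^2 + b^2) / (2*T^2)) *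
         ((-(2*a*(P^2*y) + 2*b*(P^2*x)) * (2*T^2) -
            -(a^2 + b^2) * (2*(2*(P^2)^2))) / (2*T^2)^2))|
      ≤ A * ((3*P^2/(T^2)^2) * ((1:ℝ)/2) * (T/P)) * Real.exp (-(a^2 + b^2) / (2*T^2)) +
        (A * (P/T)) * (Real.exp (-(a^2 + b^2) / (2*T^2)) * (3*(a^2+b^2)/(T^2)^2)) :=
        le_trans (abs_add_le _ _) (add_le_add hX1 hX2)
    _ = ((3/2 + 8*(3*(a^2+b^2)/(8*T^2))) * Real.exp (-(3*(a^2+b^2)/(8*T^2)))) *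
        (A * Real.exp (-(a^2 + b^2) / (8*T^2)) * P * (T*T^2)⁻¹) := by
        rw [hEsplit]
        field_simp
    _ ≤ 10 * (A * Real.exp (-(a^2 + b^2) / (8*T^2)) * P * (T*T^2)⁻¹) :=
        mul_le_mul_of_nonneg_right (hhk_aux _ (by positivity)) (by positivity)
    _ ≤ 10 * (1 * Real.exp (-(a^2 + b^2) / (8*T^2)) * P * (T*T^2)⁻¹) := by gcongr
    _ = 10 * Real.exp (-(a^2 + b^2) / (8*T^2)) * P * (T*T^2)⁻¹ := by ring


theorem stmt6 :
    ∃ C > 0, ∀ (x y s : ℝ), 0 < s →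
      |deriv (fun s => hermiteHeatKernel s x y) s| ≤
        C * Real.exp (-((x - Real.exp (-s) * y) ^ 2 + (y - Real.exp (-s) * x) ^ 2) /
            (8 * (1 - Real.exp (-2 * s)))) *
          Real.exp (-s / 2) * (1 - Real.exp (-2 * s)) ^ (-(3 : ℝ) / 2) := by
  refine ⟨10, by norm_num, fun x y s hs => ?_⟩
  have he2lt : Real.exp (-2*s) < 1 := Real.exp_lt_one_iff.mpr (by linarith)
  have htpos : (0:ℝ) < 1 - Real.exp (-2*s) := by linarith
  have hgpos : (0:ℝ) < Real.exp (-s) / (1 - Real.exp (-2*s)) :=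
    div_pos (Real.exp_pos _) htpos
  -- derivative computation
  have hdu : HasDerivAt (fun s : ℝ => Real.exp (-s)) (-Real.exp (-s)) s := by
    have h := ((hasDerivAt_id s).neg).exp
    exact h.congr_deriv (by simp)
  have hdt : HasDerivAt (fun s : ℝ => 1 - Real.exp (-2*s)) (2 * Real.exp (-2*s)) s := by
    have h := (hasDerivAt_const s (1:ℝ)).sub ((HasDerivAt.const_mul (-2:ℝ) (hasDerivAt_id s)).exp)
    exact h.congr_deriv (by simp; ring)
  have hda : HasDerivAt (fun s : ℝ => x - Real.exp (-s) * y) (Real.exp (-s) * y) s := by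
    have h := (hasDerivAt_const s x).sub (hdu.mul_const y)
    exact h.congr_deriv (by ring)
  have hdb : HasDerivAt (fun s : ℝ => y - Real.exp (-s) * x) (Real.exp (-s) * x) s := by
    have h := (hasDerivAt_const s y).sub (hdu.mul_const x)
    exact h.congr_deriv (by ring)
  have hdQ : HasDerivAt (fun s : ℝ => (x - Real.exp (-s) * y)^2 + (y - Real.exp (-s) * x)^2)
      (2*(x - Real.exp (-s)*y)*(Real.exp (-s)*y) + 2*(y - Real.exp (-s)*x)*(Real.exp (-s)*x)) s := by
    have h := (hda.pow 2).add (hdb.pow 2)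
    exact h.congr_deriv (by push_cast; ring)
  have hdg : HasDerivAt (fun s : ℝ => Real.exp (-s) / (1 - Real.exp (-2*s)))
      ((-Real.exp (-s) * (1 - Real.exp (-2*s)) - Real.exp (-s) * (2 * Real.exp (-2*s))) /
        (1 - Real.exp (-2*s))^2) s := by
    have h := hdu.div hdt htpos.ne'
    exact h
  have hdG : HasDerivAt (fun s : ℝ => (Real.exp (-s) / (1 - Real.exp (-2*s))) ^ ((1:ℝ)/2))
      (((-Real.exp (-s) * (1 - Real.exp (-2*s)) - Real.exp (-s) * (2 * Real.exp (-2*s))) /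
          (1 - Real.exp (-2*s))^2) * ((1:ℝ)/2) *
        (Real.exp (-s) / (1 - Real.exp (-2*s))) ^ ((1:ℝ)/2 - 1)) s :=
    hdg.rpow_const (Or.inl hgpos.ne')
  have hdh : HasDerivAt (fun s : ℝ =>
        -((x - Real.exp (-s) * y)^2 + (y - Real.exp (-s) * x)^2) / (2 * (1 - Real.exp (-2*s))))
      ((-(2*(x - Real.exp (-s)*y)*(Real.exp (-s)*y) + 2*(y - Real.exp (-s)*x)*(Real.exp (-s)*x)) *
          (2 * (1 - Real.exp (-2*s))) -
        -((x - Real.exp (-s) * y)^2 + (y - Real.exp (-s) * x)^2) * (2 * (2 * Real.exp (-2*s)))) /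
        (2 * (1 - Real.exp (-2*s)))^2) s := by
    have h := (hdQ.neg).div (hdt.const_mul 2) (by positivity)
    exact h
  have hdF : HasDerivAt (fun s => hermiteHeatKernel s x y)
      ((Real.pi ^ (-(1:ℝ)/2) *
          (((-Real.exp (-s) * (1 - Real.exp (-2*s)) - Real.exp (-s) * (2 * Real.exp (-2*s))) /
              (1 - Real.exp (-2*s))^2) * ((1:ℝ)/2) *
            (Real.exp (-s) / (1 - Real.exp (-2*s))) ^ ((1:ℝ)/2 - 1))) *
        Real.exp (-((x - Real.exp (-s) * y)^2 + (y - Real.exp (-s) * x)^2) /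
          (2 * (1 - Real.exp (-2*s)))) +
       (Real.pi ^ (-(1:ℝ)/2) * (Real.exp (-s) / (1 - Real.exp (-2*s))) ^ ((1:ℝ)/2)) *
        (Real.exp (-((x - Real.exp (-s) * y)^2 + (y - Real.exp (-s) * x)^2) /
            (2 * (1 - Real.exp (-2*s)))) *
          ((-(2*(x - Real.exp (-s)*y)*(Real.exp (-s)*y) + 2*(y - Real.exp (-s)*x)*(Real.exp (-s)*x)) *
              (2 * (1 - Real.exp (-2*s))) -
            -((x - Real.exp (-s) * y)^2 + (y - Real.exp (-s) * x)^2) * (2 * (2 * Real.exp (-2*s)))) /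
            (2 * (1 - Real.exp (-2*s)))^2))) s := by
    have h := (hdG.const_mul (Real.pi ^ (-(1:ℝ)/2))).mul hdh.exp
    exact h
  rw [hdF.deriv]
  set P := Real.exp (-s/2) with hPdef
  have hPpos : 0 < P := Real.exp_pos _
  have hPs : Real.exp (-s) = P^2 := by
    rw [hPdef, sq, ← Real.exp_add]; congr 1; ring
  have he2P : Real.exp (-2*s) = (P^2)^2 := by
    rw [show (-2*s) = (-s) + (-s) by ring, Real.exp_add, hPs]; ring
  set T := Real.sqrt (1 - Real.exp (-2*s)) with hTdef
  have hTpos : 0 < T := Real.sqrt_pos.mpr htpos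
  have htT : 1 - Real.exp (-2*s) = T^2 := (Real.sq_sqrt htpos.le).symm
  have hPT : T^2 = 1 - (P^2)^2 := by rw [← htT, he2P]
  have hp1 : P^2 < 1 := by rw [← hPs]; exact Real.exp_lt_one_iff.mpr (by linarith)
  have hGP : (Real.exp (-s) / (1 - Real.exp (-2*s))) ^ ((1:ℝ)/2) = P / T := by
    rw [← Real.sqrt_eq_rpow, hPs, htT, ← div_pow, Real.sqrt_sq (by positivity)]
  have hGmP : (Real.exp (-s) / (1 - Real.exp (-2*s))) ^ ((1:ℝ)/2 - 1) = T / P := by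
    rw [show ((1:ℝ)/2 - 1) = -(1/2 : ℝ) by norm_num, Real.rpow_neg hgpos.le, hGP, inv_div]
  have hT32 : (1 - Real.exp (-2*s)) ^ (-(3:ℝ)/2) = (T * T^2)⁻¹ := by
    rw [show (-(3:ℝ)/2) = -(3/2 : ℝ) by norm_num, Real.rpow_neg htpos.le,
      show ((3:ℝ)/2) = 1/2 + 1 by norm_num, Real.rpow_add htpos, Real.rpow_one,
      ← Real.sqrt_eq_rpow, ← hTdef, htT]
  have hApos : 0 < Real.pi ^ (-(1:ℝ)/2) := Real.rpow_pos_of_pos Real.pi_pos _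
  have hA1 : Real.pi ^ (-(1:ℝ)/2) ≤ 1 :=
    Real.rpow_le_one_of_one_le_of_nonpos (by nlinarith [Real.pi_gt_three]) (by norm_num)
  rw [hGP, hGmP, hT32, htT, he2P, hPs]
  exact hhk_key x y _ P T hApos hA1 hPpos hTpos hPT hp1
end

section
/- Fix s_0 > 0. There exists a constant C > 0 (depending only on s_0) such that for all real x, y and all s with s_0/2 < s < 2 s_0, |∂/∂s W_s(x,y)| ≤ C e^{-(x-y)^2/(64 s_0)} e^{-s_0/4} (1 - e^{-s_0})^{-3/2}, where W_s(x,y) is the Hermite heat kernel. -/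
open MeasureTheory Real
set_option maxHeartbeats 1000000

lemma texp_le (c t : ℝ) (hc : 0 < c) (ht : 0 ≤ t) : t * Real.exp (-(c * t)) ≤ 1 / c := by
  have h1 := Real.add_one_le_exp (c * t)
  rw [Real.exp_neg, ← div_eq_mul_inv, div_le_div_iff₀ (Real.exp_pos _) hc]
  nlinarith [Real.exp_pos (c * t), mul_nonneg hc.le ht]

lemma hhk_eq (s x y : ℝ) (hs : 0 < s) :
    hermiteHeatKernel s x y = Real.pi ^ (-(1:ℝ)/2) * Real.exp
      (((-s) - Real.log (1 - Real.exp (-2*s)))/2 -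
        ((x - Real.exp (-s)*y)^2 + (y - Real.exp (-s)*x)^2)/(2*(1 - Real.exp (-2*s)))) := by
  have ha : 0 < 1 - Real.exp (-2*s) := by
    have : Real.exp (-2*s) < 1 := Real.exp_lt_one_iff.mpr (by linarith)
    linarith
  have hr : (Real.exp (-s) / (1 - Real.exp (-2*s))) ^ ((1:ℝ)/2)
      = Real.exp (((-s) - Real.log (1 - Real.exp (-2*s)))/2) := by
    rw [Real.rpow_def_of_pos (by positivity),
      Real.log_div (Real.exp_ne_zero _) (ne_of_gt ha), Real.log_exp]
    congr 1; ring
  unfold hermiteHeatKernel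
  rw [hr, mul_assoc, ← Real.exp_add]
  congr 2
  ring

lemma phi_hasDeriv (x y s : ℝ) (hs : 0 < s) :
    HasDerivAt (fun t => ((-t) - Real.log (1 - Real.exp (-2*t)))/2 -
        ((x - Real.exp (-t)*y)^2 + (y - Real.exp (-t)*x)^2)/(2*(1 - Real.exp (-2*t))))
      (-(1/2) - Real.exp (-2*s)/(1 - Real.exp (-2*s))
        - (2*(x - Real.exp (-s)*y)*(Real.exp (-s)*y)
            + 2*(y - Real.exp (-s)*x)*(Real.exp (-s)*x))/(2*(1 - Real.exp (-2*s)))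
        + ((x - Real.exp (-s)*y)^2 + (y - Real.exp (-s)*x)^2)
            * (Real.exp (-2*s)/(1 - Real.exp (-2*s))^2)) s := by
  have ha : 0 < 1 - Real.exp (-2*s) := by
    have : Real.exp (-2*s) < 1 := Real.exp_lt_one_iff.mpr (by linarith)
    linarith
  have hE : HasDerivAt (fun t : ℝ => Real.exp (-t)) (Real.exp (-s) * (-1)) s :=
    ((hasDerivAt_id s).neg).exp
  have h2t : HasDerivAt (fun t : ℝ => -2*t) (-2) s := by
    simpa using (hasDerivAt_id s).const_mul (-2)
  have hE2 : HasDerivAt (fun t : ℝ => Real.exp (-2*t)) (Real.exp (-2*s) * (-2)) s := h2t.exp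
  have hA : HasDerivAt (fun t : ℝ => 1 - Real.exp (-2*t)) (0 - Real.exp (-2*s) * (-2)) s :=
    (hasDerivAt_const s (1:ℝ)).sub hE2
  have hlog : HasDerivAt (fun t => Real.log (1 - Real.exp (-2*t)))
      ((0 - Real.exp (-2*s) * (-2)) / (1 - Real.exp (-2*s))) s := hA.log (ne_of_gt ha)
  have hfirst : HasDerivAt (fun t => ((-t) - Real.log (1 - Real.exp (-2*t)))/2)
      (((-1) - (0 - Real.exp (-2*s) * (-2)) / (1 - Real.exp (-2*s)))/2) s :=
    (((hasDerivAt_id s).neg).sub hlog).div_const 2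
  have hq1 : HasDerivAt (fun t => x - Real.exp (-t)*y) (0 - Real.exp (-s) * (-1) * y) s :=
    (hasDerivAt_const s x).sub (hE.mul_const y)
  have hq2 : HasDerivAt (fun t => y - Real.exp (-t)*x) (0 - Real.exp (-s) * (-1) * x) s :=
    (hasDerivAt_const s y).sub (hE.mul_const x)
  have hQ : HasDerivAt (fun t => (x - Real.exp (-t)*y)^2 + (y - Real.exp (-t)*x)^2)
      (2 * (x - Real.exp (-s)*y) ^ 1 * (0 - Real.exp (-s) * (-1) * y)
        + 2 * (y - Real.exp (-s)*x) ^ 1 * (0 - Real.exp (-s) * (-1) * x)) s :=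
    (hq1.pow 2).add (hq2.pow 2)
  have hDen : HasDerivAt (fun t => 2*(1 - Real.exp (-2*t))) (2 * (0 - Real.exp (-2*s) * (-2))) s :=
    hA.const_mul 2
  have hfrac := hQ.div hDen (by positivity)
  have hall := hfirst.sub hfrac
  refine hall.congr_deriv ?_
  have h0 : (1 - Real.exp (-2*s)) ≠ 0 := ne_of_gt ha
  generalize hA2 : (1 - Real.exp (-2*s)) = A at h0 ⊢
  field_simp
  ring

lemma keybound (s₀ : ℝ) (hs₀ : 0 < s₀) :
    ∃ M > 0, ∀ (x y s : ℝ), s₀ / 2 < s → s < 2 * s₀ →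
      |deriv (fun s => hermiteHeatKernel s x y) s| ≤
        M * Real.exp (-(x - y) ^ 2 / (64 * s₀)) := by
  set a₀ : ℝ := 1 - Real.exp (-s₀) with ha₀def
  set b : ℝ := 1 - Real.exp (-(s₀/2)) with hbdef
  have ha₀ : 0 < a₀ := by
    have : Real.exp (-s₀) < 1 := Real.exp_lt_one_iff.mpr (by linarith)
    simp only [ha₀def]; linarith
  have hb : 0 < b := by
    have : Real.exp (-(s₀/2)) < 1 := Real.exp_lt_one_iff.mpr (by linarith)
    simp only [hbdef]; linarith
  set c₂ : ℝ := 1/2 + 1/a₀ with hc₂def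
  set c₃ : ℝ := 5/(2*a₀) + 4/a₀^2 with hc₃def
  have hc₂ : 0 < c₂ := by positivity
  have hc₃ : 0 < c₃ := by positivity
  refine ⟨Real.pi ^ (-(1:ℝ)/2) * Real.exp (-Real.log a₀/2) * (c₂ + c₃ * (4/b^2)),
    by positivity, ?_⟩
  intro x y s h1 h2
  have hs : 0 < s := lt_trans (half_pos hs₀) h1
  have ha : 0 < 1 - Real.exp (-2*s) := by
    have : Real.exp (-2*s) < 1 := Real.exp_lt_one_iff.mpr (by linarith)
    linarith
  -- compute the derivative
  have hφ := phi_hasDeriv x y s hs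
  have hG := (hφ.exp).const_mul (Real.pi ^ (-(1:ℝ)/2))
  have heq : (fun t => hermiteHeatKernel t x y) =ᶠ[nhds s]
      (fun t => Real.pi ^ (-(1:ℝ)/2) * Real.exp
        (((-t) - Real.log (1 - Real.exp (-2*t)))/2 -
          ((x - Real.exp (-t)*y)^2 + (y - Real.exp (-t)*x)^2)/(2*(1 - Real.exp (-2*t))))) := by
    filter_upwards [eventually_gt_nhds hs] with t ht using hhk_eq t x y ht
  rw [heq.deriv_eq, hG.deriv]
  -- abbreviations
  set u : ℝ := Real.exp (-s) with hudef
  set a : ℝ := 1 - Real.exp (-2*s) with hadef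
  set e2 : ℝ := Real.exp (-2*s) with he2def
  set Qs : ℝ := (x - u*y)^2 + (y - u*x)^2 with hQdef
  set r2 : ℝ := x^2 + y^2 with hr2def
  have hu0 : 0 < u := Real.exp_pos _
  have hu1 : u < 1 := Real.exp_lt_one_iff.mpr (by linarith)
  have he20 : 0 < e2 := Real.exp_pos _
  have he21 : e2 < 1 := Real.exp_lt_one_iff.mpr (by linarith)
  have haa₀ : a₀ ≤ a := by
    have : Real.exp (-2*s) ≤ Real.exp (-s₀) := Real.exp_le_exp.mpr (by linarith)
    simp only [hadef, ha₀def]; linarith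
  have ha1 : a ≤ 1 := by
    have : 0 < Real.exp (-2*s) := Real.exp_pos _
    simp only [hadef]; linarith
  have ha4 : a ≤ 4*s₀ := by
    have := Real.add_one_le_exp (-2*s)
    simp only [hadef]; linarith
  have hub : b ≤ 1 - u := by
    have : Real.exp (-s) ≤ Real.exp (-(s₀/2)) := Real.exp_le_exp.mpr (by linarith)
    simp only [hbdef, hudef]; linarith
  have hr2 : (0:ℝ) ≤ r2 := by positivity
  have hQ0 : (0:ℝ) ≤ Qs := by positivity
  have hQr : Qs ≤ 4*r2 := by
    simp only [hQdef, hr2def]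
    nlinarith [sq_nonneg (x + u*y), sq_nonneg (y + u*x),
      mul_nonneg (mul_nonneg (sub_nonneg.mpr hu1.le) (by linarith : (0:ℝ) ≤ 1 + u)) (sq_nonneg x),
      mul_nonneg (mul_nonneg (sub_nonneg.mpr hu1.le) (by linarith : (0:ℝ) ≤ 1 + u)) (sq_nonneg y)]
  have hQlow1 : b^2 * r2 ≤ Qs := by
    simp only [hQdef, hr2def]
    nlinarith [mul_nonneg hu0.le (sq_nonneg (x - y)),
      mul_nonneg (mul_nonneg (sub_nonneg.mpr hub) (by linarith : (0:ℝ) ≤ (1 - u) + b)) (sq_nonneg x),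
      mul_nonneg (mul_nonneg (sub_nonneg.mpr hub) (by linarith : (0:ℝ) ≤ (1 - u) + b)) (sq_nonneg y)]
  have hQlow2 : (x - y)^2 ≤ 2*Qs := by
    simp only [hQdef]
    nlinarith [sq_nonneg ((x - u*y) + (y - u*x)), mul_nonneg hu0.le (sq_nonneg (x-y)),
      sq_nonneg (u*(x-y))]
  clear_value u a e2 Qs r2 a₀ b c₂ c₃
  -- split the exponential
  have hsplit : Real.exp ((-s - Real.log a)/2 - Qs/(2*a))
      = Real.exp ((-s - Real.log a)/2) * (Real.exp (-(Qs/(4*a))) * Real.exp (-(Qs/(4*a)))) := by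
    rw [← Real.exp_add, ← Real.exp_add]
    congr 1
    field_simp
    ring
  have hB1 : Real.exp ((-s - Real.log a)/2) ≤ Real.exp (-Real.log a₀/2) := by
    apply Real.exp_le_exp.mpr
    have hlog : Real.log a₀ ≤ Real.log a := Real.log_le_log ha₀ haa₀
    linarith
  have hB3 : Real.exp (-(Qs/(4*a))) ≤ Real.exp (-(x - y)^2 / (64*s₀)) := by
    apply Real.exp_le_exp.mpr
    rw [neg_div]
    apply neg_le_neg
    rw [div_le_div_iff₀ (by positivity) (by positivity)]
    nlinarith [mul_le_mul_of_nonneg_right ha4 hQ0, mul_le_mul_of_nonneg_right hQlow2 ha.le,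
      mul_nonneg hs₀.le hQ0]
  have hB4 : Real.exp (-(Qs/(4*a))) ≤ Real.exp (-(b^2/4 * r2)) := by
    apply Real.exp_le_exp.mpr
    apply neg_le_neg
    rw [le_div_iff₀ (by positivity)]
    have h' : b^2/4*r2*(4*a) = a * (b^2*r2) := by ring
    rw [h']
    calc a * (b^2*r2) ≤ 1 * (b^2*r2) :=
          mul_le_mul_of_nonneg_right ha1 (by positivity)
      _ = b^2*r2 := one_mul _
      _ ≤ Qs := hQlow1
  -- bound on the derivative factor
  have hQp : |2*(x - u*y)*(u*y) + 2*(y - u*x)*(u*x)| ≤ Qs + r2 := by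
    rw [abs_le]
    constructor
    · simp only [hQdef, hr2def]
      nlinarith [sq_nonneg ((x - u*y) + u*y), sq_nonneg ((y - u*x) + u*x),
        mul_nonneg (mul_nonneg (sub_nonneg.mpr hu1.le) (by linarith : (0:ℝ) ≤ 1 + u)) (sq_nonneg x),
        mul_nonneg (mul_nonneg (sub_nonneg.mpr hu1.le) (by linarith : (0:ℝ) ≤ 1 + u)) (sq_nonneg y)]
    · simp only [hQdef, hr2def]
      nlinarith [sq_nonneg ((x - u*y) - u*y), sq_nonneg ((y - u*x) - u*x),
        mul_nonneg (mul_nonneg (sub_nonneg.mpr hu1.le) (by linarith : (0:ℝ) ≤ 1 + u)) (sq_nonneg x),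
        mul_nonneg (mul_nonneg (sub_nonneg.mpr hu1.le) (by linarith : (0:ℝ) ≤ 1 + u)) (sq_nonneg y)]
  have hD : |(-(1/2) - e2/a - (2*(x - u*y)*(u*y) + 2*(y - u*x)*(u*x))/(2*a)
      + Qs * (e2/a^2))| ≤ c₂ + c₃ * r2 := by
    have step1 : |(-(1/2) - e2/a - (2*(x - u*y)*(u*y) + 2*(y - u*x)*(u*x))/(2*a)
        + Qs * (e2/a^2))|
        ≤ 1/2 + e2/a + |2*(x - u*y)*(u*y) + 2*(y - u*x)*(u*x)|/(2*a) + Qs * (e2/a^2) := by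
      have e1 : (-(1/2) - e2/a - (2*(x - u*y)*(u*y) + 2*(y - u*x)*(u*x))/(2*a) + Qs * (e2/a^2))
          = ((-(1/2)) + (-(e2/a))) + (-((2*(x - u*y)*(u*y) + 2*(y - u*x)*(u*x))/(2*a)))
            + Qs * (e2/a^2) := by ring
      have A1 := abs_add_le (((-(1/2)) + (-(e2/a)))
        + (-((2*(x - u*y)*(u*y) + 2*(y - u*x)*(u*x))/(2*a)))) (Qs * (e2/a^2))
      have A2 := abs_add_le ((-(1/2)) + (-(e2/a)))
        (-((2*(x - u*y)*(u*y) + 2*(y - u*x)*(u*x))/(2*a)))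
      have A3 := abs_add_le (-(1/2) : ℝ) (-(e2/a))
      have v1 : |(-(1/2) : ℝ)| = 1/2 := by norm_num
      have v2 : |(-(e2/a))| = e2/a := by
        rw [abs_neg, abs_of_nonneg (by positivity : (0:ℝ) ≤ e2/a)]
      have v3 : |(-((2*(x - u*y)*(u*y) + 2*(y - u*x)*(u*x))/(2*a)))|
          = |2*(x - u*y)*(u*y) + 2*(y - u*x)*(u*x)|/(2*a) := by
        rw [abs_neg, abs_div, abs_of_nonneg (by positivity : (0:ℝ) ≤ 2*a)]
      have v4 : |Qs * (e2/a^2)| = Qs * (e2/a^2) :=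
        abs_of_nonneg (by positivity)
      rw [e1]
      linarith [A1, A2, A3, v1.le, v1.ge, v2.le, v2.ge, v3.le, v3.ge, v4.le, v4.ge]
    have t2 : e2/a ≤ 1/a₀ := div_le_div₀ (by norm_num) he21.le ha₀ haa₀
    have t3 : |2*(x - u*y)*(u*y) + 2*(y - u*x)*(u*x)|/(2*a) ≤ 5*r2/(2*a₀) := by
      apply div_le_div₀ (by positivity) _ (by positivity) (by linarith)
      calc |2*(x - u*y)*(u*y) + 2*(y - u*x)*(u*x)| ≤ Qs + r2 := hQp
        _ ≤ 5*r2 := by linarith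
    have t4 : Qs * (e2/a^2) ≤ 4*r2 * (1/a₀^2) := by
      apply mul_le_mul hQr _ (by positivity) (by positivity)
      apply div_le_div₀ (by norm_num) he21.le (by positivity)
      exact pow_le_pow_left₀ ha₀.le haa₀ 2
    have hc3eq : c₃ * r2 = 5*r2/(2*a₀) + 4*r2 * (1/a₀^2) := by
      rw [hc₃def]; ring
    rw [hc₂def]
    linarith [step1, t2, t3, t4, hc3eq.ge, hc3eq.le]
  have he1 : Real.exp (-(b^2/4 * r2)) ≤ 1 := Real.exp_le_one_iff.mpr (neg_nonpos.mpr (by positivity))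
  have he2' : r2 * Real.exp (-(b^2/4 * r2)) ≤ 4/b^2 := by
    have := texp_le (b^2/4) r2 (by positivity) hr2
    rwa [one_div_div] at this
  have hB6 : (c₂ + c₃*r2) * Real.exp (-(b^2/4 * r2)) ≤ c₂ + c₃*(4/b^2) := by
    calc (c₂ + c₃*r2) * Real.exp (-(b^2/4 * r2))
        = c₂ * Real.exp (-(b^2/4 * r2)) + c₃ * (r2 * Real.exp (-(b^2/4 * r2))) := by ring
      _ ≤ c₂ * 1 + c₃ * (4/b^2) :=
          add_le_add (mul_le_mul_of_nonneg_left he1 hc₂.le)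
            (mul_le_mul_of_nonneg_left he2' hc₃.le)
      _ = c₂ + c₃*(4/b^2) := by ring
  -- assembly
  have hπ : (0:ℝ) ≤ Real.pi ^ (-(1:ℝ)/2) := le_of_lt (by positivity)
  rw [abs_mul, abs_of_nonneg hπ, abs_mul, abs_of_nonneg (Real.exp_nonneg _)]
  calc Real.pi ^ (-(1:ℝ)/2) * (Real.exp ((-s - Real.log a)/2 - Qs/(2*a))
        * |(-(1/2) - e2/a - (2*(x - u*y)*(u*y) + 2*(y - u*x)*(u*x))/(2*a) + Qs * (e2/a^2))|)
      = Real.pi ^ (-(1:ℝ)/2) * ((Real.exp ((-s - Real.log a)/2)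
          * (Real.exp (-(Qs/(4*a))) * Real.exp (-(Qs/(4*a)))))
        * |(-(1/2) - e2/a - (2*(x - u*y)*(u*y) + 2*(y - u*x)*(u*x))/(2*a) + Qs * (e2/a^2))|) := by
        rw [hsplit]
    _ ≤ Real.pi ^ (-(1:ℝ)/2) * ((Real.exp (-Real.log a₀/2)
          * (Real.exp (-(b^2/4 * r2)) * Real.exp (-(x - y)^2 / (64*s₀))))
        * (c₂ + c₃ * r2)) := by
        gcongr
    _ = Real.pi ^ (-(1:ℝ)/2) * Real.exp (-Real.log a₀/2)
          * ((c₂ + c₃*r2) * Real.exp (-(b^2/4 * r2))) * Real.exp (-(x - y)^2 / (64*s₀)) := by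
        ring
    _ ≤ Real.pi ^ (-(1:ℝ)/2) * Real.exp (-Real.log a₀/2)
          * (c₂ + c₃*(4/b^2)) * Real.exp (-(x - y)^2 / (64*s₀)) := by
        have h0 : (0:ℝ) ≤ Real.pi ^ (-(1:ℝ)/2) * Real.exp (-Real.log a₀/2) := by positivity
        exact mul_le_mul_of_nonneg_right (mul_le_mul_of_nonneg_left hB6 h0)
          (Real.exp_nonneg _)
    _ = Real.pi ^ (-(1:ℝ)/2) * Real.exp (-Real.log a₀/2) * (c₂ + c₃ * (4/b^2))
          * Real.exp (-(x - y)^2 / (64*s₀)) := by ring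

theorem stmt7 (s₀ : ℝ) (hs₀ : 0 < s₀) :
    ∃ C > 0, ∀ (x y s : ℝ), s₀ / 2 < s → s < 2 * s₀ →
      |deriv (fun s => hermiteHeatKernel s x y) s| ≤
        C * Real.exp (-(x - y) ^ 2 / (64 * s₀)) * Real.exp (-s₀ / 4) *
          (1 - Real.exp (-s₀)) ^ (-(3 : ℝ) / 2) := by
  obtain ⟨M, hM, hbound⟩ := keybound s₀ hs₀
  have ha₀ : 0 < 1 - Real.exp (-s₀) := by
    have : Real.exp (-s₀) < 1 := Real.exp_lt_one_iff.mpr (by linarith)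
    linarith
  refine ⟨M * Real.exp (s₀/4) * (1 - Real.exp (-s₀)) ^ ((3:ℝ)/2),
    mul_pos (mul_pos hM (Real.exp_pos _)) (Real.rpow_pos_of_pos ha₀ _), ?_⟩
  intro x y s h1 h2
  have hb := hbound x y s h1 h2
  have hexp1 : Real.exp (s₀/4) * Real.exp (-s₀/4) = 1 := by
    rw [← Real.exp_add, show s₀/4 + -s₀/4 = 0 by ring, Real.exp_zero]
  have hrpow1 : (1 - Real.exp (-s₀)) ^ ((3:ℝ)/2) * (1 - Real.exp (-s₀)) ^ (-(3:ℝ)/2) = 1 := by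
    rw [← Real.rpow_add ha₀]
    have h30 : (3:ℝ)/2 + -(3:ℝ)/2 = 0 := by norm_num
    rw [h30, Real.rpow_zero]
  have hEq : M * Real.exp (s₀/4) * (1 - Real.exp (-s₀)) ^ ((3:ℝ)/2)
        * Real.exp (-(x - y) ^ 2 / (64 * s₀)) * Real.exp (-s₀/4)
        * (1 - Real.exp (-s₀)) ^ (-(3:ℝ)/2)
      = M * Real.exp (-(x - y) ^ 2 / (64 * s₀))
        * (Real.exp (s₀/4) * Real.exp (-s₀/4))
        * ((1 - Real.exp (-s₀)) ^ ((3:ℝ)/2) * (1 - Real.exp (-s₀)) ^ (-(3:ℝ)/2)) := by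
    ring
  calc |deriv (fun s => hermiteHeatKernel s x y) s|
      ≤ M * Real.exp (-(x - y) ^ 2 / (64 * s₀)) := hb
    _ = M * Real.exp (s₀/4) * (1 - Real.exp (-s₀)) ^ ((3:ℝ)/2)
        * Real.exp (-(x - y) ^ 2 / (64 * s₀)) * Real.exp (-s₀/4)
        * (1 - Real.exp (-s₀)) ^ (-(3:ℝ)/2) := by
        rw [hEq, hexp1, hrpow1]; ring
end

section
/- There exists a constant C > 0 such that for all q ≥ 2 and all real x ≠ z, the quantity (∫_{Γ(x)} |(s ∂/∂s W_s(y,z))|_{s=t^2}|^q dt dy / t^2)^{1/q} is at most C/|x - z|, where Γ(x) = {(y,t) ∈ ℝ × (0,∞) : |x - y| < t} and W_s is the Hermite heat kernel. -/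
open MeasureTheory Real

noncomputable def hhkDeriv (y z s : ℝ) : ℝ :=
  Real.pi ^ (-(1 : ℝ) / 2) * (Real.exp (-s) / (1 - Real.exp (-2 * s))) ^ ((1 : ℝ) / 2) *
    Real.exp (-((y - Real.exp (-s) * z) ^ 2 + (z - Real.exp (-s) * y) ^ 2) /
      (2 * (1 - Real.exp (-2 * s)))) *
    ( -(1 + Real.exp (-s) ^ 2) / (2 * (1 - Real.exp (-2 * s)))
      - 2 * Real.exp (-s) * (y - Real.exp (-s) * z) * (z - Real.exp (-s) * y) /
        (1 - Real.exp (-2 * s)) ^ 2 )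

lemma sigma_pos {s : ℝ} (hs : 0 < s) : 0 < 1 - Real.exp (-2 * s) := by
  have : Real.exp (-2 * s) < 1 := Real.exp_lt_one_iff.mpr (by linarith)
  linarith

lemma hasDerivAt_hhk (y z : ℝ) {s : ℝ} (hs : 0 < s) :
    HasDerivAt (fun s => hermiteHeatKernel s y z) (hhkDeriv y z s) s := by
  have hσ : (0:ℝ) < 1 - Real.exp (-2 * s) := sigma_pos hs
  have ha : (0:ℝ) < Real.exp (-s) := Real.exp_pos _
  have hh : (0:ℝ) < Real.exp (-s) / (1 - Real.exp (-2 * s)) := div_pos ha hσ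
  have hA : HasDerivAt (fun s : ℝ => Real.exp (-s)) (-Real.exp (-s)) s := by
    simpa [Function.comp_def] using (Real.hasDerivAt_exp (-s)).comp s (hasDerivAt_neg s)
  have hS : HasDerivAt (fun s : ℝ => 1 - Real.exp (-2 * s)) (2 * Real.exp (-2 * s)) s := by
    have h2 : HasDerivAt (fun s : ℝ => -2 * s) (-2) s := by
      simpa using (hasDerivAt_id s).const_mul (-2 : ℝ)
    have := (Real.hasDerivAt_exp (-2 * s)).comp s h2
    simpa [mul_comm, Function.comp_def, Pi.sub_def] using (hasDerivAt_const s (1:ℝ)).sub this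
  have hH : HasDerivAt (fun s : ℝ => Real.exp (-s) / (1 - Real.exp (-2 * s)))
      ((-Real.exp (-s) * (1 - Real.exp (-2 * s)) - Real.exp (-s) * (2 * Real.exp (-2 * s))) /
        (1 - Real.exp (-2 * s)) ^ 2) s := hA.div hS hσ.ne'
  have hP := hH.rpow_const (p := (1:ℝ)/2) (Or.inl hh.ne')
  have hU : HasDerivAt (fun s : ℝ => (y - Real.exp (-s) * z) ^ 2 + (z - Real.exp (-s) * y) ^ 2)
      (2 * (y - Real.exp (-s) * z) * (Real.exp (-s) * z)
        + 2 * (z - Real.exp (-s) * y) * (Real.exp (-s) * y)) s := by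
    have h1 : HasDerivAt (fun s : ℝ => y - Real.exp (-s) * z) (Real.exp (-s) * z) s := by
      simpa [Pi.sub_def] using (hasDerivAt_const s y).sub (hA.mul_const z)
    have h2 : HasDerivAt (fun s : ℝ => z - Real.exp (-s) * y) (Real.exp (-s) * y) s := by
      simpa [Pi.sub_def] using (hasDerivAt_const s z).sub (hA.mul_const y)
    simpa [mul_comm, mul_assoc, Pi.add_def, Pi.pow_def] using (h1.pow 2).add (h2.pow 2)
  have hE : HasDerivAt (fun s : ℝ =>
      -((y - Real.exp (-s) * z) ^ 2 + (z - Real.exp (-s) * y) ^ 2) /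
        (2 * (1 - Real.exp (-2 * s))))
      ((-(2 * (y - Real.exp (-s) * z) * (Real.exp (-s) * z)
          + 2 * (z - Real.exp (-s) * y) * (Real.exp (-s) * y)) * (2 * (1 - Real.exp (-2 * s)))
        - -((y - Real.exp (-s) * z) ^ 2 + (z - Real.exp (-s) * y) ^ 2) *
            (2 * (2 * Real.exp (-2 * s)))) / (2 * (1 - Real.exp (-2 * s))) ^ 2) s := by
    exact (hU.neg).div ((hS.const_mul 2)) (by positivity)
  have hExp := hE.exp
  have := ((hP.const_mul (Real.pi ^ (-(1 : ℝ) / 2))).mul hExp)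
  unfold hermiteHeatKernel hhkDeriv
  refine this.congr_deriv ?_
  have hea : Real.exp (-2 * s) = Real.exp (-s) ^ 2 := by
    rw [← Real.exp_nat_mul]; ring_nf
  have hrw : (Real.exp (-s) / (1 - Real.exp (-2 * s))) ^ ((1:ℝ)/2 - 1)
      = (Real.exp (-s) / (1 - Real.exp (-2 * s))) ^ ((1:ℝ)/2) / (Real.exp (-s) / (1 - Real.exp (-2 * s))) := by
    rw [Real.rpow_sub hh, Real.rpow_one]
  rw [hrw, hea]
  have hσ' : (1:ℝ) - Real.exp (-s) ^ 2 ≠ 0 := by rw [← hea]; exact hσ.ne'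
  have ha' : Real.exp (-s) ≠ 0 := ha.ne'
  field_simp
  ring

lemma lem_one_add_le (w : ℝ) (hw : 0 ≤ w) : 1 + w ≤ 3 * Real.exp (w / 4) := by
  have h1 : 1 + w / 8 ≤ Real.exp (w / 8) := by
    have := Real.add_one_le_exp (w / 8); linarith
  have h2 : (1 + w / 8) ^ 2 ≤ Real.exp (w / 8) ^ 2 :=
    pow_le_pow_left₀ (by linarith) h1 2
  have h3 : Real.exp (w / 8) ^ 2 = Real.exp (w / 4) := by
    rw [← Real.exp_nat_mul]; push_cast; ring_nf
  nlinarith [h2, h3, sq_nonneg (w - 8/3)]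

lemma lem_sigma_lb {s : ℝ} (hs : 0 < s) : 2 * s / (1 + 2 * s) ≤ 1 - Real.exp (-2 * s) := by
  have hp : (0:ℝ) < 1 + 2 * s := by linarith
  have h3 : Real.exp (-2 * s) ≤ (1 + 2 * s)⁻¹ := by
    rw [show (-2 : ℝ) * s = -(2*s) by ring, Real.exp_neg]
    exact inv_anti₀ hp (by have := Real.add_one_le_exp (2 * s); linarith)
  have h4 : (1 + 2*s)⁻¹ * (1 + 2*s) = 1 := inv_mul_cancel₀ hp.ne'
  rw [div_le_iff₀ hp]
  nlinarith [mul_le_mul_of_nonneg_right h3 hp.le]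

lemma lem_sigma_ub (s : ℝ) : 1 - Real.exp (-2 * s) ≤ 2 * s := by
  have h := Real.add_one_le_exp (-2 * s)
  linarith

lemma lem_s_exp {s : ℝ} (hs : 0 < s) :
    s * Real.exp (-s / 3) ≤ 3 * (1 - Real.exp (-2 * s)) := by
  have hp : (0:ℝ) < 1 + s / 3 := by linarith
  have hp2 : (0:ℝ) < 1 + 2 * s := by linarith
  have h3 : Real.exp (-s / 3) ≤ (1 + s / 3)⁻¹ := by
    rw [show (-s : ℝ) / 3 = -(s/3) by ring, Real.exp_neg]
    exact inv_anti₀ hp (by have := Real.add_one_le_exp (s / 3); linarith)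
  have h4 : s * Real.exp (-s / 3) ≤ s * (1 + s / 3)⁻¹ :=
    mul_le_mul_of_nonneg_left h3 hs.le
  have h5 := lem_sigma_lb hs
  have h6 : s * (1 + s / 3)⁻¹ ≤ 3 * (2 * s / (1 + 2 * s)) := by
    rw [mul_inv_le_iff₀ hp]
    rw [show (3:ℝ) * (2 * s / (1 + 2 * s)) * (1 + s / 3) = (6 * s * (1 + s/3)) / (1+2*s) by ring]
    rw [le_div_iff₀ hp2]
    nlinarith
  have h7 : 3 * (2 * s / (1 + 2 * s)) ≤ 3 * (1 - Real.exp (-2*s)) := by linarith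
  linarith

lemma hhkDeriv_bound (y z : ℝ) {s : ℝ} (hs : 0 < s) :
    |s * hhkDeriv y z s| ≤ 18 * Real.exp (-(y - z) ^ 2 / (16 * s)) / Real.sqrt s := by
  have hσ : (0:ℝ) < 1 - Real.exp (-2 * s) := sigma_pos hs
  have ha : (0:ℝ) < Real.exp (-s) := Real.exp_pos _
  have ha1 : Real.exp (-s) ≤ 1 := Real.exp_le_one_iff.mpr (by linarith)
  set a := Real.exp (-s) with ha_def
  set σ := 1 - Real.exp (-2 * s) with hσ_def
  set u₁ := y - a * z with hu1
  set u₂ := z - a * y with hu2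
  set N := u₁ ^ 2 + u₂ ^ 2 with hN_def
  have hN : 0 ≤ N := by positivity
  have hσ2s : σ ≤ 2 * s := lem_sigma_ub s
  have hbr : |(-(1 + a ^ 2) / (2 * σ) - 2 * a * u₁ * u₂ / σ ^ 2)|
      ≤ (1 + N / σ) / σ := by
    have t1 : |(-(1 + a ^ 2) / (2 * σ))| = (1 + a ^ 2) / (2 * σ) := by
      rw [abs_div, abs_of_nonpos (by nlinarith), abs_of_pos (by positivity)]
      ring
    have t2 : |2 * a * u₁ * u₂ / σ ^ 2| = 2 * a * (|u₁| * |u₂|) / σ ^ 2 := by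
      rw [abs_div, abs_mul, abs_mul, abs_of_nonneg (by positivity : (0:ℝ) ≤ 2 * a),
        abs_of_pos (by positivity : (0:ℝ) < σ ^ 2)]
      ring
    have t3 : 2 * a * (|u₁| * |u₂|) ≤ N := by
      have e1 : |u₁| ^ 2 = u₁ ^ 2 := sq_abs u₁
      have e2 : |u₂| ^ 2 = u₂ ^ 2 := sq_abs u₂
      nlinarith [sq_nonneg (|u₁| - |u₂|), abs_nonneg u₁, abs_nonneg u₂,
        mul_nonneg (abs_nonneg u₁) (abs_nonneg u₂)]
    have t4 : (1 + a ^ 2) / (2 * σ) ≤ 1 / σ := by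
      rw [div_le_div_iff₀ (by positivity) hσ]
      nlinarith [mul_le_mul_of_nonneg_right (by nlinarith : a ^ 2 ≤ 1) hσ.le]
    have t5 : 2 * a * (|u₁| * |u₂|) / σ ^ 2 ≤ N / σ ^ 2 :=
      div_le_div_of_nonneg_right t3 (by positivity) |>.trans_eq rfl
    calc |(-(1 + a ^ 2) / (2 * σ) - 2 * a * u₁ * u₂ / σ ^ 2)|
        ≤ |(-(1 + a ^ 2) / (2 * σ))| + |2 * a * u₁ * u₂ / σ ^ 2| := abs_sub _ _
      _ = (1 + a ^ 2) / (2 * σ) + 2 * a * (|u₁| * |u₂|) / σ ^ 2 := by rw [t1, t2]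
      _ ≤ 1 / σ + N / σ ^ 2 := add_le_add t4 t5
      _ = (1 + N / σ) / σ := by field_simp
  have hEN : Real.exp (-N / (2 * σ)) * (1 + N / σ)
      ≤ 3 * Real.exp (-(y - z) ^ 2 / (16 * s)) := by
    have s1 : 1 + N / σ ≤ 3 * Real.exp (N / σ / 4) := lem_one_add_le _ (by positivity)
    have s2 : Real.exp (-N / (2 * σ)) * (3 * Real.exp (N / σ / 4))
        = 3 * Real.exp (-(N / (4 * σ))) := by
      rw [mul_comm, mul_assoc, ← Real.exp_add]
      congr 1
      field_simp
      ring
    have hNlb : (y - z) ^ 2 ≤ 2 * N := by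
      rw [hN_def, hu1, hu2]
      nlinarith [sq_nonneg ((1 - a) * (y + z)), sq_nonneg (a * (y - z)),
        mul_nonneg ha.le (sq_nonneg (y - z))]
    have s3 : Real.exp (-(N / (4 * σ))) ≤ Real.exp (-(y - z) ^ 2 / (16 * s)) := by
      apply Real.exp_le_exp.mpr
      rw [neg_div, neg_le_neg_iff, div_le_div_iff₀ (by positivity) (by positivity)]
      nlinarith [mul_le_mul_of_nonneg_right hNlb hσ.le,
        mul_le_mul_of_nonneg_left hσ2s hN]
    calc Real.exp (-N / (2 * σ)) * (1 + N / σ)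
        ≤ Real.exp (-N / (2 * σ)) * (3 * Real.exp (N / σ / 4)) := by
          exact mul_le_mul_of_nonneg_left s1 (Real.exp_pos _).le
      _ = 3 * Real.exp (-(N / (4 * σ))) := s2
      _ ≤ 3 * Real.exp (-(y - z) ^ 2 / (16 * s)) := by linarith [s3]
  have hP6 : s * Real.sqrt (a / σ) / σ ≤ 6 / Real.sqrt s := by
    have hc := lem_s_exp hs
    have he : Real.exp (-s / 3) ^ 3 = a := by
      rw [← Real.exp_nat_mul]; push_cast; rw [ha_def]; ring_nf
    have hcc : (s * Real.exp (-s / 3)) ^ 3 ≤ (3 * σ) ^ 3 :=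
      pow_le_pow_left₀ (by positivity) hc 3
    have c3 : s ^ 3 * a ≤ 27 * σ ^ 3 := by
      calc s ^ 3 * a = (s * Real.exp (-s / 3)) ^ 3 := by rw [← he]; ring
        _ ≤ (3 * σ) ^ 3 := hcc
        _ = 27 * σ ^ 3 := by ring
    have hkey : s * Real.sqrt a * Real.sqrt s ≤ 6 * (σ * Real.sqrt σ) := by
      have e1 : (s * Real.sqrt a * Real.sqrt s) ^ 2 = s ^ 3 * a := by
        rw [mul_pow, mul_pow, Real.sq_sqrt ha.le, Real.sq_sqrt hs.le]; ring
      have e2 : (6 * (σ * Real.sqrt σ)) ^ 2 = 36 * σ ^ 3 := by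
        rw [mul_pow, mul_pow, Real.sq_sqrt hσ.le]; ring
      have hx : (0:ℝ) ≤ s * Real.sqrt a * Real.sqrt s := by positivity
      have hy : (0:ℝ) ≤ 6 * (σ * Real.sqrt σ) := by positivity
      have hsq : (s * Real.sqrt a * Real.sqrt s) ^ 2 ≤ (6 * (σ * Real.sqrt σ)) ^ 2 := by
        rw [e1, e2]
        have : (0:ℝ) ≤ σ ^ 3 := by positivity
        linarith
      exact (pow_le_pow_iff_left₀ hx hy two_ne_zero).mp hsq
    rw [Real.sqrt_div ha.le, div_le_div_iff₀ (by positivity) (Real.sqrt_pos.mpr hs)]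
    rw [show s * (Real.sqrt a / Real.sqrt σ) * Real.sqrt s
        = (s * Real.sqrt a * Real.sqrt s) / Real.sqrt σ by ring]
    rw [div_le_iff₀ (Real.sqrt_pos.mpr hσ)]
    exact hkey.trans_eq (by ring)
  have hA1 : Real.pi ^ (-(1:ℝ) / 2) ≤ 1 :=
    Real.rpow_le_one_of_one_le_of_nonpos (by linarith [Real.pi_gt_three]) (by norm_num)
  have hA0 : (0:ℝ) ≤ Real.pi ^ (-(1:ℝ) / 2) := Real.rpow_nonneg Real.pi_pos.le _
  have hPnn : (0:ℝ) ≤ (a / σ) ^ ((1:ℝ)/2) := Real.rpow_nonneg (by positivity) _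
  have hPsqrt : (a / σ) ^ ((1:ℝ)/2) = Real.sqrt (a / σ) := (Real.sqrt_eq_rpow _).symm
  unfold hhkDeriv
  rw [abs_mul, abs_of_pos hs, abs_mul, abs_of_nonneg (by positivity)]
  calc s * (Real.pi ^ (-(1:ℝ) / 2) * (a / σ) ^ ((1:ℝ)/2) * Real.exp (-N / (2 * σ)) *
        |(-(1 + a ^ 2) / (2 * σ) - 2 * a * u₁ * u₂ / σ ^ 2)|)
      ≤ s * (1 * (a / σ) ^ ((1:ℝ)/2) * Real.exp (-N / (2 * σ)) * ((1 + N / σ) / σ)) := by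
        gcongr
      _ = (s * Real.sqrt (a / σ) / σ) * (Real.exp (-N / (2 * σ)) * (1 + N / σ)) := by
        rw [hPsqrt]; ring
      _ ≤ (6 / Real.sqrt s) * (3 * Real.exp (-(y - z) ^ 2 / (16 * s))) := by
        apply mul_le_mul hP6 hEN (by positivity) (by positivity)
      _ = 18 * Real.exp (-(y - z) ^ 2 / (16 * s)) / Real.sqrt s := by ring

lemma cone_pointwise (z : ℝ) {y t : ℝ} (ht : 0 < t) :
    |t ^ 2 * deriv (fun s => hermiteHeatKernel s y z) (t ^ 2)|
      ≤ 18 * Real.exp (-(y - z) ^ 2 / (16 * t ^ 2)) / t := by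
  have hs : (0:ℝ) < t ^ 2 := by positivity
  rw [(hasDerivAt_hhk y z hs).deriv]
  have h := hhkDeriv_bound y z hs
  rwa [Real.sqrt_sq ht.le] at h

lemma myExpRpow (u q : ℝ) : Real.exp u ^ q = Real.exp (u * q) := by
  rw [Real.rpow_def_of_pos (Real.exp_pos u), Real.log_exp]

lemma lem_exp_le {q w : ℝ} (hq : 0 < q) (hw : 0 < w) :
    Real.exp (-(q * w)) ≤ (1 / (Real.exp 1 * w)) ^ q := by
  have hb : (0:ℝ) < 1 / (Real.exp 1 * w) := by positivity
  rw [Real.rpow_def_of_pos hb]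
  apply Real.exp_le_exp.mpr
  have hlog : Real.log (1 / (Real.exp 1 * w)) = -(1 + Real.log w) := by
    rw [one_div, Real.log_inv, Real.log_mul (Real.exp_pos 1).ne' hw.ne', Real.log_exp]
  rw [hlog]
  have h1 : Real.log w ≤ w - 1 := Real.log_le_sub_one_of_pos hw
  nlinarith [mul_le_mul_of_nonneg_left h1 hq.le]

lemma pointwise_maj (x z q r : ℝ) (hq : 2 ≤ q) (hr : 0 < r)
    (hrd : |x - z| = r) {y t : ℝ} (ht : 0 < t) (hyt : |x - y| < t) :
    |t ^ 2 * deriv (fun s => hermiteHeatKernel s y z) (t ^ 2)| ^ q / t ^ 2 ≤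
      if t ≤ r / 2 then (1152 / (Real.exp 1 * r ^ 2)) ^ q * t ^ (q - 2)
      else 18 ^ q * (t ^ (q + 2))⁻¹ := by
  have hq0 : (0:ℝ) < q := by linarith
  have hB := cone_pointwise z (y := y) ht
  have h0 : (0:ℝ) ≤ |t ^ 2 * deriv (fun s => hermiteHeatKernel s y z) (t ^ 2)| := abs_nonneg _
  have step1 := Real.rpow_le_rpow h0 hB hq0.le
  have hEq : (18 * Real.exp (-(y - z) ^ 2 / (16 * t ^ 2)) / t) ^ q
      = 18 ^ q * Real.exp (-(y - z) ^ 2 / (16 * t ^ 2) * q) / t ^ q := by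
    rw [Real.div_rpow (by positivity) ht.le,
      Real.mul_rpow (by norm_num) (Real.exp_pos _).le, myExpRpow]
  rw [hEq] at step1
  have hdiv := div_le_div_of_nonneg_right step1 (show (0:ℝ) ≤ t ^ 2 by positivity)
  split_ifs with hcase
  · -- small t
    have htri : |x - z| ≤ |x - y| + |y - z| := abs_sub_le x y z
    have hyz : r / 2 ≤ |y - z| := by
      rw [hrd] at htri; linarith
    have hd2 : r ^ 2 / 4 ≤ (y - z) ^ 2 := by
      have h1 : (r/2)^2 ≤ |y - z|^2 := pow_le_pow_left₀ (by linarith) hyz 2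
      rw [sq_abs] at h1; nlinarith
    have hT : (0:ℝ) < t ^ 2 := by positivity
    have step3 : Real.exp (-(y - z) ^ 2 / (16 * t ^ 2) * q)
        ≤ Real.exp (-(q * (r ^ 2 / (64 * t ^ 2)))) := by
      apply Real.exp_le_exp.mpr
      rw [show -(y - z) ^ 2 / (16 * t ^ 2) * q = -((y - z) ^ 2 * q / 16) / t ^ 2 by ring,
        show -(q * (r ^ 2 / (64 * t ^ 2))) = -(q * r ^ 2 / 64) / t ^ 2 by ring,
        div_le_div_iff_of_pos_right hT]
      nlinarith [mul_le_mul_of_nonneg_right hd2 hq0.le]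
    have step4 := lem_exp_le hq0 (show (0:ℝ) < r ^ 2 / (64 * t ^ 2) by positivity)
    have step5 : (1 / (Real.exp 1 * (r ^ 2 / (64 * t ^ 2)))) ^ q
        = (64 * t ^ 2 / (Real.exp 1 * r ^ 2)) ^ q := by
      congr 1
      rw [eq_div_iff (by positivity)]
      field_simp
    have hEX : Real.exp (-(y - z) ^ 2 / (16 * t ^ 2) * q)
        ≤ (64 * t ^ 2 / (Real.exp 1 * r ^ 2)) ^ q := by
      rw [← step5]; exact step3.trans step4
    have final : 18 ^ q * Real.exp (-(y - z) ^ 2 / (16 * t ^ 2) * q) / t ^ q / t ^ 2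
        ≤ 18 ^ q * (64 * t ^ 2 / (Real.exp 1 * r ^ 2)) ^ q / t ^ q / t ^ 2 := by
      gcongr
    have eqchain : (18:ℝ) ^ q * (64 * t ^ 2 / (Real.exp 1 * r ^ 2)) ^ q / t ^ q / t ^ 2
        = (1152 / (Real.exp 1 * r ^ 2)) ^ q * t ^ (q - 2) := by
      have e1 : (18:ℝ) ^ q * (64 * t ^ 2 / (Real.exp 1 * r ^ 2)) ^ q
          = (1152 / (Real.exp 1 * r ^ 2)) ^ q * (t ^ 2 : ℝ) ^ (q : ℝ) := by
        rw [← Real.mul_rpow (by norm_num) (by positivity),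
          show (18:ℝ) * (64 * t ^ 2 / (Real.exp 1 * r ^ 2))
            = 1152 / (Real.exp 1 * r ^ 2) * t ^ 2 by ring,
          Real.mul_rpow (by positivity) (by positivity)]
      have e2 : ((t:ℝ) ^ (2:ℕ)) ^ (q:ℝ) = t ^ (2*q) := by
        rw [← Real.rpow_natCast t 2, ← Real.rpow_mul ht.le]
        norm_num
      have e3 : t ^ (2*q) / t ^ q = t ^ q := by
        rw [← Real.rpow_sub ht]; congr 1; ring
      have e4 : t ^ q / (t:ℝ) ^ (2:ℕ) = t ^ (q - 2) := by
        rw [← Real.rpow_natCast t 2, ← Real.rpow_sub ht]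
        norm_num
      calc (18:ℝ) ^ q * (64 * t ^ 2 / (Real.exp 1 * r ^ 2)) ^ q / t ^ q / t ^ 2
          = (1152 / (Real.exp 1 * r ^ 2)) ^ q * (t ^ (2*q) / t ^ q) / t ^ 2 := by
            rw [e1, e2]; ring
        _ = (1152 / (Real.exp 1 * r ^ 2)) ^ q * (t ^ q / t ^ 2) := by rw [e3]; ring
        _ = (1152 / (Real.exp 1 * r ^ 2)) ^ q * t ^ (q - 2) := by rw [e4]
    exact (hdiv.trans final).trans_eq eqchain
  · -- large t
    have hE1 : Real.exp (-(y - z) ^ 2 / (16 * t ^ 2) * q) ≤ 1 := by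
      apply Real.exp_le_one_iff.mpr
      have h1 : (0:ℝ) ≤ (y - z) ^ 2 / (16 * t ^ 2) := by positivity
      have : -(y - z) ^ 2 / (16 * t ^ 2) ≤ 0 := by rw [neg_div]; linarith
      exact mul_nonpos_of_nonpos_of_nonneg this hq0.le
    have final : 18 ^ q * Real.exp (-(y - z) ^ 2 / (16 * t ^ 2) * q) / t ^ q / t ^ 2
        ≤ 18 ^ q * 1 / t ^ q / t ^ 2 := by
      gcongr
    have eqchain : (18:ℝ) ^ q * 1 / t ^ q / t ^ 2 = 18 ^ q * (t ^ (q + 2))⁻¹ := by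
      rw [Real.rpow_add ht, show ((t:ℝ) ^ (2:ℝ)) = t ^ (2:ℕ) by
        rw [← Real.rpow_natCast t 2]; norm_num]
      rw [mul_inv]
      ring
    exact (hdiv.trans final).trans_eq eqchain

open intervalIntegral in
lemma int_Ioc_rpow {b p : ℝ} (hb : 0 ≤ b) (hp : 0 ≤ p) :
    ∫ t in Set.Ioc 0 b, t ^ p = (b ^ (p + 1) - (0:ℝ) ^ (p + 1)) / (p + 1) := by
  rw [← integral_of_le hb, integral_rpow (Or.inl (by linarith : (-1:ℝ) < p))]

theorem stmt8 :
    ∃ C > 0, ∀ q : ℝ, 2 ≤ q → ∀ x z : ℝ, x ≠ z →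
      (∫ p in {p : ℝ × ℝ | 0 < p.2 ∧ |x - p.1| < p.2},
          |p.2 ^ 2 * deriv (fun s => hermiteHeatKernel s p.1 z) (p.2 ^ 2)| ^ q / p.2 ^ 2) ^
        (1 / q) ≤ C / |x - z| := by
  refine ⟨1000, by norm_num, ?_⟩
  intro q hq x z hxz
  have hq0 : (0:ℝ) < q := by linarith
  set r := |x - z| with hr_def
  have hr : 0 < r := abs_pos.mpr (sub_ne_zero.mpr hxz)
  set S : Set (ℝ × ℝ) := {p : ℝ × ℝ | 0 < p.2 ∧ |x - p.1| < p.2} with hS_def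
  have hS : MeasurableSet S := by
    have h1 : MeasurableSet {p : ℝ × ℝ | 0 < p.2} :=
      measurableSet_lt measurable_const measurable_snd
    have h2 : MeasurableSet {p : ℝ × ℝ | |x - p.1| < p.2} :=
      measurableSet_lt ((measurable_const.sub measurable_fst).abs) measurable_snd
    exact h1.inter h2
  set c₁ : ℝ := (1152 / (Real.exp 1 * r ^ 2)) ^ q with hc1_def
  set c₂ : ℝ := (18:ℝ) ^ q with hc2_def
  have hc1 : 0 ≤ c₁ := Real.rpow_nonneg (by positivity) q
  have hc2 : 0 ≤ c₂ := Real.rpow_nonneg (by norm_num) q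
  set g : ℝ → ℝ := fun t => if t ≤ r / 2 then c₁ * t ^ (q - 2) else c₂ * (t ^ (q + 2))⁻¹
    with hg_def
  have hg_meas : Measurable g := by
    apply Measurable.ite (measurableSet_le measurable_id measurable_const)
    · exact (Real.continuous_rpow_const (by linarith)).measurable.const_mul c₁
    · exact ((Real.continuous_rpow_const (by linarith)).measurable.inv).const_mul c₂
  have hg_nonneg : ∀ t : ℝ, 0 < t → 0 ≤ g t := by
    intro t ht
    simp only [hg_def]
    split_ifs
    · exact mul_nonneg hc1 (Real.rpow_nonneg ht.le _)
    · exact mul_nonneg hc2 (inv_nonneg.mpr (Real.rpow_nonneg ht.le _))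
  -- the indicator majorant on the product space
  set G : ℝ × ℝ → ℝ := S.indicator (fun p => g p.2) with hG_def
  -- sections
  have hfun : ∀ t : ℝ, 0 < t →
      (fun y => G (y, t)) = (Set.Ioo (x - t) (x + t)).indicator (fun _ => g t) := by
    intro t ht
    funext y
    have hmem : ((y, t) ∈ S) ↔ y ∈ Set.Ioo (x - t) (x + t) := by
      simp only [hS_def, Set.mem_setOf_eq, Set.mem_Ioo, abs_sub_lt_iff]
      constructor
      · rintro ⟨-, h1, h2⟩; constructor <;> linarith
      · rintro ⟨h1, h2⟩; exact ⟨ht, by linarith, by linarith⟩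
    rw [hG_def, Set.indicator_apply, Set.indicator_apply, if_congr hmem rfl rfl]
  have hfun0 : ∀ t : ℝ, ¬ (0 < t) → ∀ y : ℝ, G (y, t) = 0 := by
    intro t ht y
    rw [hG_def, Set.indicator_apply, if_neg]
    exact fun h => ht h.1
  have hsec_int : ∀ t : ℝ, Integrable (fun y => G (y, t)) volume := by
    intro t
    by_cases ht : 0 < t
    · rw [hfun t ht]
      exact (integrable_indicator_iff measurableSet_Ioo).mpr
        (integrableOn_const measure_Ioo_lt_top.ne)
    · have : (fun y => G (y, t)) = (fun _ => (0:ℝ)) := funext (hfun0 t ht)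
      rw [this]
      exact integrable_zero _ _ _
  -- the 1-d majorant
  set φ : ℝ → ℝ := fun t =>
    (Set.Ioc 0 (r/2)).indicator (fun t => 2 * c₁ * t ^ (q - 1)) t +
    (Set.Ioi (r/2)).indicator (fun t => 2 * c₂ * (t ^ (q + 1))⁻¹) t with hφ_def
  have hp1 : IntegrableOn (fun t : ℝ => 2 * c₁ * t ^ (q - 1)) (Set.Ioc 0 (r/2)) volume := by
    have h1 : IntervalIntegrable (fun t : ℝ => t ^ (q - 1)) volume 0 (r/2) :=
      intervalIntegral.intervalIntegrable_rpow' (by linarith)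
    have h2 := (intervalIntegrable_iff_integrableOn_Ioc_of_le (by positivity : (0:ℝ) ≤ r/2)).mp h1
    exact h2.const_mul _
  have hp2 : IntegrableOn (fun t : ℝ => 2 * c₂ * (t ^ (q + 1))⁻¹) (Set.Ioi (r/2)) volume := by
    have h1 : IntegrableOn (fun t : ℝ => t ^ (-(q + 1))) (Set.Ioi (r/2)) volume :=
      integrableOn_Ioi_rpow_of_lt (by linarith) (by positivity)
    have h2 : IntegrableOn (fun t : ℝ => (t ^ (q + 1))⁻¹) (Set.Ioi (r/2)) volume := by
      apply h1.congr_fun _ measurableSet_Ioi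
      intro t ht
      exact Real.rpow_neg (le_of_lt (lt_trans (by positivity) ht)) (q + 1)
    exact h2.const_mul _
  have hφ_int : Integrable φ volume := by
    exact ((integrable_indicator_iff measurableSet_Ioc).mpr hp1).add
      ((integrable_indicator_iff measurableSet_Ioi).mpr hp2)
  -- the inner integral equals φ
  have hinner : ∀ t : ℝ, ∫ y, G (y, t) = φ t := by
    intro t
    by_cases ht : 0 < t
    · rw [hfun t ht, integral_indicator_const _ measurableSet_Ioo, Real.volume_real_Ioo_of_le (by linarith),
        show x + t - (x - t) = 2*t by ring, smul_eq_mul]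
      by_cases hc : t ≤ r/2
      · have ht1 : t ∈ Set.Ioc 0 (r/2) := ⟨ht, hc⟩
        have ht2 : t ∉ Set.Ioi (r/2) := by simp only [Set.mem_Ioi, not_lt]; exact hc
        rw [hφ_def]
        simp only [Set.indicator_of_mem ht1, Set.indicator_of_notMem ht2, add_zero]
        simp only [hg_def, if_pos hc]
        rw [show q - 1 = q - 2 + 1 by ring, Real.rpow_add_one ht.ne']
        ring
      · have ht1 : t ∉ Set.Ioc 0 (r/2) := by
          simp only [Set.mem_Ioc, not_and, not_le]; intro; linarith [lt_of_not_ge hc]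
        have ht2 : t ∈ Set.Ioi (r/2) := lt_of_not_ge hc
        rw [hφ_def]
        simp only [Set.indicator_of_notMem ht1, Set.indicator_of_mem ht2, zero_add]
        simp only [hg_def, if_neg hc]
        rw [show q + 2 = q + 1 + 1 by ring, Real.rpow_add_one ht.ne', mul_inv]
        field_simp
    · have h1 : (fun y => G (y, t)) = (fun _ => (0:ℝ)) := funext (hfun0 t ht)
      rw [h1, integral_const, smul_eq_mul, mul_zero]
      have ht1 : t ∉ Set.Ioc 0 (r/2) := by
        simp only [Set.mem_Ioc, not_and]; intro h; exact absurd h ht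
      have ht2 : t ∉ Set.Ioi (r/2) := by
        simp only [Set.mem_Ioi, not_lt]
        linarith [le_of_not_gt ht, hr]
      rw [hφ_def]
      simp only [Set.indicator_of_notMem ht1, Set.indicator_of_notMem ht2, add_zero]
  -- Fubini: G is integrable on the product
  have hGnn : ∀ p : ℝ × ℝ, 0 ≤ G p := by
    intro p
    rw [hG_def, Set.indicator_apply]
    split_ifs with h
    · exact hg_nonneg p.2 h.1
    · exact le_refl 0
  have hnorm_eq : (fun t => ∫ y, ‖G (y, t)‖) = φ := by
    funext t
    have h1 : ∫ y, ‖G (y, t)‖ = ∫ y, G (y, t) :=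
      integral_congr_ae (Filter.Eventually.of_forall fun y => by
        show ‖G (y, t)‖ = G (y, t)
        rw [Real.norm_eq_abs, abs_of_nonneg (hGnn _)])
    rw [h1, hinner t]
  have hGmeas : AEStronglyMeasurable G (volume.prod volume) := by
    rw [hG_def]
    exact ((hg_meas.comp measurable_snd).indicator hS).aestronglyMeasurable
  have hGint : Integrable G (volume.prod volume) := by
    refine (integrable_prod_iff' hGmeas).mpr ⟨Filter.Eventually.of_forall hsec_int, ?_⟩
    rw [hnorm_eq]
    exact hφ_int
  have hGval : ∫ p, G p ∂(volume.prod volume) = ∫ t, φ t := by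
    rw [integral_prod_symm G hGint]
    simp only [hinner]
  -- values of the 1d integrals
  have hv1 : ∫ t in Set.Ioc 0 (r/2), 2 * c₁ * t ^ (q - 1) = 2 * c₁ * ((r/2) ^ q / q) := by
    rw [MeasureTheory.integral_const_mul,
      int_Ioc_rpow (by positivity : (0:ℝ) ≤ r/2) (by linarith : (0:ℝ) ≤ q - 1)]
    rw [show q - 1 + 1 = q by ring, Real.zero_rpow hq0.ne']
    ring
  have hv2 : ∫ t in Set.Ioi (r/2), 2 * c₂ * (t ^ (q + 1))⁻¹ = 2 * c₂ * ((r/2) ^ (-q) / q) := by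
    have hcong : Set.EqOn (fun t : ℝ => 2 * c₂ * (t ^ (q + 1))⁻¹)
        (fun t : ℝ => 2 * c₂ * t ^ (-(q+1))) (Set.Ioi (r/2)) := by
      intro t ht
      simp only
      rw [Real.rpow_neg (le_of_lt (lt_trans (by positivity) ht))]
    rw [setIntegral_congr_fun measurableSet_Ioi hcong]
    rw [MeasureTheory.integral_const_mul]
    rw [integral_Ioi_rpow_of_lt (by linarith : -(q+1) < -1) (by positivity : (0:ℝ) < r/2)]
    rw [show -(q+1) + 1 = -q by ring, neg_div_neg_eq]
  have hφ_val : ∫ t, φ t = 2 * c₁ * ((r/2) ^ q / q) + 2 * c₂ * ((r/2) ^ (-q) / q) := by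
    simp only [hφ_def]
    rw [integral_add ((integrable_indicator_iff measurableSet_Ioc).mpr hp1)
      ((integrable_indicator_iff measurableSet_Ioi).mpr hp2),
      integral_indicator measurableSet_Ioc, integral_indicator measurableSet_Ioi, hv1, hv2]
  -- numeric bounds
  have he2 : (2:ℝ) ≤ Real.exp 1 := by have := Real.add_one_le_exp 1; linarith
  have hb1 : 2 * c₁ * ((r/2) ^ q / q) ≤ (288 / r) ^ q := by
    have h2 : (2:ℝ)/q ≤ 1 := by rw [div_le_one hq0]; linarith
    have h3 : c₁ * (r/2)^q = (576/(Real.exp 1 * r))^q := by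
      rw [hc1_def, ← Real.mul_rpow (by positivity) (by positivity)]
      congr 1
      field_simp
      ring
    have h4 : (576/(Real.exp 1 * r))^q ≤ (288/r)^q := by
      apply Real.rpow_le_rpow (by positivity) _ hq0.le
      rw [div_le_div_iff₀ (by positivity) hr]
      nlinarith
    have h5 : 0 ≤ c₁ * (r/2)^q := mul_nonneg hc1 (Real.rpow_nonneg (by positivity) q)
    calc 2 * c₁ * ((r/2) ^ q / q) = (2/q) * (c₁ * (r/2)^q) := by ring
      _ ≤ 1 * (c₁ * (r/2)^q) := mul_le_mul_of_nonneg_right h2 h5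
      _ = c₁ * (r/2)^q := one_mul _
      _ = (576/(Real.exp 1 * r))^q := h3
      _ ≤ (288/r)^q := h4
  have hb2 : 2 * c₂ * ((r/2) ^ (-q) / q) ≤ (288 / r) ^ q := by
    have h2 : (2:ℝ)/q ≤ 1 := by rw [div_le_one hq0]; linarith
    have h36 : (36:ℝ)/r = 18/(r/2) := by
      rw [div_div_eq_mul_div]; ring
    have h3 : c₂ * (r/2)^(-q) = (36/r)^q := by
      rw [hc2_def, Real.rpow_neg (by linarith : (0:ℝ) ≤ r/2), h36,
        Real.div_rpow (by norm_num) (by linarith : (0:ℝ) ≤ r/2), div_eq_mul_inv]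
      ring
    have h4 : (36/r)^q ≤ (288/r)^q := by
      apply Real.rpow_le_rpow (by positivity) _ hq0.le
      exact (div_le_div_iff_of_pos_right hr).mpr (by norm_num)
    have h5 : 0 ≤ c₂ * (r/2)^(-q) := mul_nonneg hc2 (Real.rpow_nonneg (by positivity) _)
    calc 2 * c₂ * ((r/2) ^ (-q) / q) = (2/q) * (c₂ * (r/2)^(-q)) := by ring
      _ ≤ 1 * (c₂ * (r/2)^(-q)) := mul_le_mul_of_nonneg_right h2 h5
      _ = c₂ * (r/2)^(-q) := one_mul _
      _ = (36/r)^q := h3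
      _ ≤ (288/r)^q := h4
  have hsum : 2 * c₁ * ((r/2) ^ q / q) + 2 * c₂ * ((r/2) ^ (-q) / q) ≤ (1000/r)^q := by
    have h7 : (2:ℝ) ≤ 2^q := by
      calc (2:ℝ) = 2^(1:ℝ) := (Real.rpow_one 2).symm
        _ ≤ 2^q := Real.rpow_le_rpow_of_exponent_le one_le_two (by linarith)
    have h8 : 2 * (288/r)^q ≤ 2^q * (288/r)^q :=
      mul_le_mul_of_nonneg_right h7 (Real.rpow_nonneg (by positivity) q)
    have h9 : (2:ℝ)^q * (288/r)^q = (576/r)^q := by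
      rw [← Real.mul_rpow (by norm_num) (by positivity)]
      congr 1
      ring
    have h10 : (576/r)^q ≤ (1000/r)^q :=
      Real.rpow_le_rpow (by positivity) ((div_le_div_iff_of_pos_right hr).mpr (by norm_num)) hq0.le
    linarith [hb1, hb2, h8, h9 ▸ h8, h10]
  -- put things together
  have hF_nonneg : ∀ p : ℝ × ℝ,
      0 ≤ |p.2 ^ 2 * deriv (fun s => hermiteHeatKernel s p.1 z) (p.2 ^ 2)| ^ q / p.2 ^ 2 :=
    fun p => div_nonneg (Real.rpow_nonneg (abs_nonneg _) q) (by positivity)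
  have hGint' : Integrable G volume := hGint
  have hmono : (∫ p in S,
      |p.2 ^ 2 * deriv (fun s => hermiteHeatKernel s p.1 z) (p.2 ^ 2)| ^ q / p.2 ^ 2) ≤
      ∫ p in S, g p.2 := by
    apply integral_mono_of_nonneg
    · exact Filter.Eventually.of_forall fun p => hF_nonneg p
    · exact (integrable_indicator_iff hS).mp (hG_def ▸ hGint')
    · apply (ae_restrict_iff' hS).mpr
      apply Filter.Eventually.of_forall
      intro p hp
      have hpm := pointwise_maj x z q r hq hr hr_def.symm hp.1 hp.2
      simpa [hg_def] using hpm
  have hval2 : ∫ p in S, g p.2 = ∫ t, φ t := by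
    calc ∫ p in S, g p.2 = ∫ p, G p := by rw [hG_def, integral_indicator hS]
      _ = ∫ p, G p ∂(volume.prod volume) := rfl
      _ = ∫ t, φ t := hGval
  have hIle : (∫ p in S,
      |p.2 ^ 2 * deriv (fun s => hermiteHeatKernel s p.1 z) (p.2 ^ 2)| ^ q / p.2 ^ 2) ≤
      (1000/r)^q := by
    calc (∫ p in S, |p.2 ^ 2 * deriv (fun s => hermiteHeatKernel s p.1 z) (p.2 ^ 2)| ^ q / p.2 ^ 2)
        ≤ ∫ p in S, g p.2 := hmono
      _ = ∫ t, φ t := hval2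
      _ = 2 * c₁ * ((r/2) ^ q / q) + 2 * c₂ * ((r/2) ^ (-q) / q) := hφ_val
      _ ≤ (1000/r)^q := hsum
  have h0' : 0 ≤ ∫ p in S,
      |p.2 ^ 2 * deriv (fun s => hermiteHeatKernel s p.1 z) (p.2 ^ 2)| ^ q / p.2 ^ 2 :=
    integral_nonneg hF_nonneg
  calc (∫ p in S,
      |p.2 ^ 2 * deriv (fun s => hermiteHeatKernel s p.1 z) (p.2 ^ 2)| ^ q / p.2 ^ 2) ^ (1/q)
      ≤ ((1000/r)^q) ^ (1/q) := Real.rpow_le_rpow h0' hIle (by positivity)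
    _ = 1000/r := by
        rw [← Real.rpow_mul (by positivity), mul_one_div_cancel hq0.ne', Real.rpow_one]
end
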